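/- The set L(T̃(x), x^n, x^{2n}−1; g(x)) ∩ K[x]_{n−1}^3 of triples (u,v,w) of polynomials of degree ≤ n−1 with T̃u + x^n v + (x^{2n}−1)w = g has exactly one element, when T is an invertible Toeplitz matrix. -/

import Mathlib

open Polynomial Finset

/-- The polynomial `T̃(x)` associated to the Toeplitz matrix with entries `t_{i-j}`. -/
noncomputable def Ttilde {K : Type*} [Field K] (n : ℕ) (t : ℤ → K) : Polynomial K :=
  ∑ i ∈ Finset.range (2 * n),
    C (if i < n then t i else t ((i : ℤ) - 2 * n)) * X ^ i

section aux

variable {K : Type*} [Field K]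

noncomputable def polyOf (n : ℕ) (a : ℕ → K) : Polynomial K :=
  ∑ i ∈ range n, C (a i) * X ^ i

lemma polyOf_coeff (n : ℕ) (a : ℕ → K) (m : ℕ) :
    (polyOf n a).coeff m = if m < n then a m else 0 := by
  simp only [polyOf, finset_sum_coeff, coeff_C_mul, coeff_X_pow, mul_ite, mul_one, mul_zero]
  rw [Finset.sum_ite_eq (range n) m a]
  simp

lemma polyOf_degree (n : ℕ) (a : ℕ → K) : (polyOf n a).degree < n := by
  apply lt_of_le_of_lt (degree_sum_le _ _)
  rw [Finset.sup_lt_iff (by exact_mod_cast WithBot.bot_lt_coe n)]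
  intro i hi
  exact lt_of_le_of_lt (degree_C_mul_X_pow_le _ _) (by exact_mod_cast mem_range.mp hi)

lemma coeff_zero' {n : ℕ} {p : Polynomial K} (hp : p.degree < (n : WithBot ℕ)) {m : ℕ}
    (hm : n ≤ m) : p.coeff m = 0 :=
  coeff_eq_zero_of_degree_lt (hp.trans_le (by exact_mod_cast hm))

lemma Ttilde_coeff (n : ℕ) (t : ℤ → K) (k : ℕ) :
    (Ttilde n t).coeff k =
      if k < 2 * n then (if k < n then t k else t ((k : ℤ) - 2 * n)) else 0 :=
  polyOf_coeff (2 * n) _ k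

lemma claimA (n : ℕ) (t : ℤ → K) (u : Polynomial K) (i : ℕ) (hi : i < n) :
    (Ttilde n t * u).coeff i =
      ∑ j ∈ range n, if j ≤ i then t ((i : ℤ) - (j : ℤ)) * u.coeff j else 0 := by
  rw [mul_comm, coeff_mul, Finset.Nat.sum_antidiagonal_eq_sum_range_succ_mk]
  rw [← Finset.sum_subset (Finset.range_subset_range.mpr hi) (fun j _ hj => by
    rw [if_neg]
    exact fun h => hj (mem_range.mpr (Nat.lt_succ_of_le h)))]
  apply Finset.sum_congr rfl
  intro j hj
  have hji : j ≤ i := Nat.lt_succ_iff.mp (mem_range.mp hj)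
  have h1 : i - j < n := lt_of_le_of_lt (Nat.sub_le _ _) hi
  rw [if_pos hji, Ttilde_coeff, if_pos (by omega), if_pos h1, mul_comm]
  congr 2
  omega

lemma claimB (n : ℕ) (t : ℤ → K) (u : Polynomial K) (hu : u.degree < n) (i : ℕ) :
    (Ttilde n t * u).coeff (2 * n + i) =
      ∑ j ∈ range n, if j ≤ i then 0 else t ((i : ℤ) - (j : ℤ)) * u.coeff j := by
  rw [mul_comm, coeff_mul, Finset.Nat.sum_antidiagonal_eq_sum_range_succ_mk]
  rw [← Finset.sum_subset (Finset.range_subset_range.mpr (by omega : n ≤ 2 * n + i + 1))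
    (fun j _ hj => by
      have : u.coeff j = 0 := coeff_eq_zero_of_degree_lt
        (lt_of_lt_of_le hu (by exact_mod_cast not_lt.mp (fun h => hj (mem_range.mpr h))))
      simp [this])]
  apply Finset.sum_congr rfl
  intro j hj
  have hjn : j < n := mem_range.mp hj
  by_cases hji : j ≤ i
  · rw [if_pos hji, Ttilde_coeff, if_neg (by omega), mul_zero]
  · rw [if_neg hji, Ttilde_coeff, if_pos (by omega), if_neg (by omega), mul_comm]
    congr 2
    push_cast
    omega

lemma keylem (n : ℕ) (t : ℤ → K) (u : Polynomial K) (hu : u.degree < n) (i : ℕ) (hi : i < n) :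
    (Ttilde n t * u).coeff i + (Ttilde n t * u).coeff (2 * n + i) =
      ∑ j ∈ range n, t ((i : ℤ) - (j : ℤ)) * u.coeff j := by
  rw [claimA n t u i hi, claimB n t u hu i, ← Finset.sum_add_distrib]
  apply Finset.sum_congr rfl
  intro j _
  split_ifs <;> ring

lemma coeff_Ttilde_mul_eq_zero {n : ℕ} (t : ℤ → K) {u : Polynomial K} (hu : u.degree < n)
    {m : ℕ} (hm : 3 * n ≤ m) : (Ttilde n t * u).coeff m = 0 := by
  rw [coeff_mul]
  apply Finset.sum_eq_zero
  rintro ⟨k, j⟩ hkj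
  rw [Finset.HasAntidiagonal.mem_antidiagonal] at hkj
  by_cases hk : k < 2 * n
  · have : u.coeff j = 0 := coeff_zero' hu (by omega)
    simp [this]
  · rw [Ttilde_coeff, if_neg hk, zero_mul]

lemma lhs_coeff (n : ℕ) (v w : Polynomial K) (m : ℕ) :
    (X ^ n * v + (X ^ (2 * n) - 1) * w).coeff m =
      (if n ≤ m then v.coeff (m - n) else 0) +
        ((if 2 * n ≤ m then w.coeff (m - 2 * n) else 0) - w.coeff m) := by
  rw [coeff_add, mul_comm (X ^ n) v, sub_mul, one_mul, coeff_sub,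
    mul_comm (X ^ (2 * n)) w, coeff_mul_X_pow', coeff_mul_X_pow']

lemma sol_vec {n : ℕ} (t : ℤ → K) {g u v w : Polynomial K} (hg : g.degree < n)
    (hu : u.degree < n) (hv : v.degree < n) (hw : w.degree < n)
    (heq : Ttilde n t * u + X ^ n * v + (X ^ (2 * n) - 1) * w = g)
    {i : ℕ} (hi : i < n) :
    ∑ j ∈ range n, t ((i : ℤ) - (j : ℤ)) * u.coeff j = g.coeff i := by
  rw [← keylem n t u hu i hi]
  have heq' : Ttilde n t * u = g - (X ^ n * v + (X ^ (2 * n) - 1) * w) := by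
    rw [← heq]; ring
  rw [heq', coeff_sub, coeff_sub, lhs_coeff, lhs_coeff]
  rw [if_neg (by omega : ¬ n ≤ i), if_neg (by omega : ¬ 2 * n ≤ i),
    if_pos (by omega : n ≤ 2 * n + i), if_pos (by omega : 2 * n ≤ 2 * n + i)]
  have h2 : 2 * n + i - n = n + i := by omega
  have h3 : 2 * n + i - 2 * n = i := by omega
  have e1 : v.coeff (n + i) = 0 := coeff_zero' hv (by omega)
  have e2 : w.coeff (2 * n + i) = 0 := coeff_zero' hw (by omega)
  have e3 : g.coeff (2 * n + i) = 0 := coeff_zero' hg (by omega)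
  rw [h2, h3, e1, e2, e3]
  ring

lemma mulVec_toeplitz {n : ℕ} (t : ℤ → K) (T : Matrix (Fin n) (Fin n) K)
    (hT : T = Matrix.of fun i j : Fin n => t ((i : ℤ) - (j : ℤ))) (b : ℕ → K) (i : Fin n) :
    T.mulVec (fun j : Fin n => b j) i = ∑ j ∈ range n, t ((i : ℤ) - (j : ℤ)) * b j := by
  subst hT
  rw [← Fin.sum_univ_eq_sum_range (fun j => t ((i : ℤ) - (j : ℤ)) * b j) n]
  simp [Matrix.mulVec, dotProduct]

end aux

/-- When `T` is an invertible Toeplitz matrix and `g(x)` has degree `≤ n-1`, the set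
`L(T̃(x), x^n, x^{2n}-1; g(x)) ∩ K[x]_{n-1}^3` has exactly one element. -/
theorem stmt_7 {K : Type*} [Field K] (n : ℕ) (hn : 0 < n) (t : ℤ → K)
    (T : Matrix (Fin n) (Fin n) K) (hT : T = Matrix.of fun i j : Fin n => t ((i : ℤ) - (j : ℤ)))
    (hTinv : IsUnit T)
    (g : Polynomial K) (hg : g.degree < n) :
    ∃! uvw : Polynomial K × Polynomial K × Polynomial K,
      uvw.1.degree < n ∧ uvw.2.1.degree < n ∧ uvw.2.2.degree < n ∧
      Ttilde n t * uvw.1 + X ^ n * uvw.2.1 + (X ^ (2 * n) - 1) * uvw.2.2 = g := by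
  classical
  have hdet : IsUnit T.det := (Matrix.isUnit_iff_isUnit_det T).mp hTinv
  have hTT : T * T⁻¹ = 1 := Matrix.mul_nonsing_inv T hdet
  set gvec : Fin n → K := fun i => g.coeff i with hgvec
  set uvec : Fin n → K := T⁻¹.mulVec gvec with huvec
  set u₀ : Polynomial K := polyOf n (fun j => if h : j < n then uvec ⟨j, h⟩ else 0) with hu₀def
  have hu₀c : ∀ j : ℕ, u₀.coeff j = if h : j < n then uvec ⟨j, h⟩ else 0 := by
    intro j
    rw [hu₀def, polyOf_coeff]
    by_cases h : j < n <;> simp [h]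
  have hu₀fin : (fun j : Fin n => u₀.coeff j) = uvec := by
    funext j
    rw [hu₀c]
    simp [j.isLt]
  have hu₀ : u₀.degree < (n : WithBot ℕ) := polyOf_degree _ _
  have hmul : T.mulVec uvec = gvec := by
    rw [huvec, Matrix.mulVec_mulVec, hTT, Matrix.one_mulVec]
  have hsum : ∀ i : ℕ, i < n → ∑ j ∈ range n, t ((i : ℤ) - (j : ℤ)) * u₀.coeff j = g.coeff i := by
    intro i hi
    have h1 := mulVec_toeplitz t T hT (fun j => u₀.coeff j) ⟨i, hi⟩
    rw [hu₀fin, hmul] at h1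
    rw [← h1]
  have hkey : ∀ i : ℕ, i < n →
      (Ttilde n t * u₀).coeff i + (Ttilde n t * u₀).coeff (2 * n + i) = g.coeff i := by
    intro i hi
    rw [keylem n t u₀ hu₀ i hi]
    exact hsum i hi
  set w₀ : Polynomial K := polyOf n (fun i => (g - Ttilde n t * u₀).coeff (2 * n + i)) with hw₀def
  set v₀ : Polynomial K := polyOf n (fun i => (g - Ttilde n t * u₀).coeff (n + i)) with hv₀def
  have hv₀ : v₀.degree < (n : WithBot ℕ) := polyOf_degree _ _
  have hw₀ : w₀.degree < (n : WithBot ℕ) := polyOf_degree _ _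
  have heq₀ : Ttilde n t * u₀ + X ^ n * v₀ + (X ^ (2 * n) - 1) * w₀ = g := by
    ext m
    rw [add_assoc, coeff_add, lhs_coeff]
    by_cases hm1 : m < n
    · rw [if_neg (by omega), if_neg (by omega)]
      have hwc : w₀.coeff m = (g - Ttilde n t * u₀).coeff (2 * n + m) := by
        rw [hw₀def, polyOf_coeff, if_pos hm1]
      rw [hwc, coeff_sub, coeff_zero' hg (by omega : n ≤ 2 * n + m)]
      linear_combination hkey m hm1
    · by_cases hm2 : m < 2 * n
      · rw [if_pos (by omega), if_neg (by omega)]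
        have hvc : v₀.coeff (m - n) = (g - Ttilde n t * u₀).coeff m := by
          rw [hv₀def, polyOf_coeff, if_pos (by omega)]
          congr 1
          omega
        have hwc : w₀.coeff m = 0 := by rw [hw₀def, polyOf_coeff, if_neg (by omega)]
        rw [hvc, hwc, coeff_sub]
        ring
      · by_cases hm3 : m < 3 * n
        · rw [if_pos (by omega), if_pos (by omega)]
          have hvc : v₀.coeff (m - n) = 0 := by rw [hv₀def, polyOf_coeff, if_neg (by omega)]
          have hwc1 : w₀.coeff (m - 2 * n) = (g - Ttilde n t * u₀).coeff m := by
            rw [hw₀def, polyOf_coeff, if_pos (by omega)]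
            congr 1
            omega
          have hwc2 : w₀.coeff m = 0 := by rw [hw₀def, polyOf_coeff, if_neg (by omega)]
          rw [hvc, hwc1, hwc2, coeff_sub]
          ring
        · rw [if_pos (by omega), if_pos (by omega)]
          have hvc : v₀.coeff (m - n) = 0 := by rw [hv₀def, polyOf_coeff, if_neg (by omega)]
          have hwc1 : w₀.coeff (m - 2 * n) = 0 := by
            rw [hw₀def, polyOf_coeff, if_neg (by omega)]
          have hwc2 : w₀.coeff m = 0 := by rw [hw₀def, polyOf_coeff, if_neg (by omega)]
          rw [hvc, hwc1, hwc2, coeff_Ttilde_mul_eq_zero t hu₀ (by omega : 3 * n ≤ m),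
            coeff_zero' hg (by omega : n ≤ m)]
          ring
  refine ⟨(u₀, v₀, w₀), ⟨hu₀, hv₀, hw₀, heq₀⟩, ?_⟩
  rintro ⟨u, v, w⟩ ⟨hu, hv, hw, heq⟩
  have hueq : u = u₀ := by
    have hvec : (fun j : Fin n => u.coeff j) = uvec := by
      apply Matrix.mulVec_injective_iff_isUnit.mpr hTinv
      rw [hmul]
      funext i
      rw [mulVec_toeplitz t T hT (fun j => u.coeff j) i,
        sol_vec t hg hu hv hw heq i.isLt]
    ext m
    rw [hu₀c]
    by_cases h : m < n
    · rw [dif_pos h]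
      exact congrFun hvec ⟨m, h⟩
    · rw [dif_neg h]
      exact coeff_zero' hu (by omega)
  have hVW : X ^ n * v + (X ^ (2 * n) - 1) * w = X ^ n * v₀ + (X ^ (2 * n) - 1) * w₀ := by
    rw [hueq] at heq
    linear_combination heq - heq₀
  have hweq : w = w₀ := by
    ext i
    by_cases h : i < n
    · have h2 : 2 * n + i - n = n + i := by omega
      have h3 : 2 * n + i - 2 * n = i := by omega
      have e1 : v.coeff (n + i) = 0 := coeff_zero' hv (by omega)
      have e2 : v₀.coeff (n + i) = 0 := coeff_zero' hv₀ (by omega)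
      have e3 : w.coeff (2 * n + i) = 0 := coeff_zero' hw (by omega)
      have e4 : w₀.coeff (2 * n + i) = 0 := coeff_zero' hw₀ (by omega)
      have h1 := congrArg (fun p => p.coeff (2 * n + i)) hVW
      simp only [lhs_coeff, h2, h3, e1, e2, e3, e4,
        if_pos (show n ≤ 2 * n + i by omega), if_pos (show 2 * n ≤ 2 * n + i by omega)] at h1
      simpa using h1
    · rw [coeff_zero' hw (by omega), coeff_zero' hw₀ (by omega)]
  have hveq : v = v₀ := by
    have h4 : X ^ n * v = X ^ n * v₀ := by
      rw [hweq] at hVW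
      exact add_right_cancel hVW
    exact mul_left_cancel₀ (pow_ne_zero n X_ne_zero) h4
  rw [Prod.mk.injEq, Prod.mk.injEq]
  exact ⟨hueq, hveq, hweq⟩
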